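/- Let (a_n)_{n≥0} be a nonincreasing sequence of positive reals with liminf n·a_n > 0 and a_n → 0. For T > 0 define τ(n,T) = inf{k ≥ n : a_n + a_{n+1} + ··· + a_k ≥ T}. If a* > 0 satisfies n·a_n > a* for all sufficiently large n, then τ(n,T)/n ≤ exp(T/a* + 1) for all sufficiently large n; in particular, for each T > 0, sup_n τ(n,T)/n < ∞. -/

import Mathlib

open Filter
open scoped Topology

private lemma telescope_log (n k : ℕ) (h : n ≤ k) :
    ∑ m ∈ Finset.Icc n k, (Real.log ((m : ℝ) + 1) - Real.log m)
      = Real.log ((k : ℝ) + 1) - Real.log n := by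
  induction k, h using Nat.le_induction with
  | base => simp
  | succ k hk ih =>
      rw [Finset.sum_Icc_succ_top (by omega), ih]
      push_cast
      ring

/-- **Lemma (growth of the stopping index `τ(n,T)`).**
For a nonincreasing positive sequence `(a_n)` with `a_n → 0` and `n·a_n > a* > 0`
eventually, the index `τ(n,T) = inf {k ≥ n : a_n + ⋯ + a_k ≥ T}` satisfies
`τ(n,T)/n ≤ exp(T/a* + 1)` for all large `n`; in particular `sup_n τ(n,T)/n < ∞`
for every `T > 0`. -/
theorem tau_linear_growth
    (a : ℕ → ℝ) (ha_pos : ∀ n, 0 < a n) (ha_anti : ∀ n, a (n+1) ≤ a n)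
    (ha_lim : Tendsto a atTop (𝓝 0))
    (astar : ℝ) (hastar : 0 < astar)
    (h_liminf : ∀ᶠ n : ℕ in atTop, astar < (n : ℝ) * a n)
    (τ : ℕ → ℝ → ℕ)
    (hτ : ∀ n T, τ n T = sInf {k : ℕ | n ≤ k ∧ T ≤ ∑ m ∈ Finset.Icc n k, a m}) :
    (∀ T : ℝ, 0 < T →
      ∀ᶠ n : ℕ in atTop, (τ n T : ℝ) / n ≤ Real.exp (T / astar + 1)) ∧
    (∀ T : ℝ, 0 < T → BddAbove (Set.range fun n : ℕ => (τ n T : ℝ) / n)) := by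
  have key : ∀ T : ℝ, 0 < T →
      ∀ᶠ n : ℕ in atTop, (τ n T : ℝ) / n ≤ Real.exp (T / astar + 1) := by
    intro T hT
    obtain ⟨N, hN⟩ := eventually_atTop.mp h_liminf
    filter_upwards [eventually_ge_atTop (max N 1)] with n hn
    have hn1 : 1 ≤ n := le_trans (le_max_right _ _) hn
    have hnN : N ≤ n := le_trans (le_max_left _ _) hn
    set M := ⌈Real.exp (T / astar)⌉₊ with hM
    have hM1 : 1 ≤ M := Nat.one_le_ceil_iff.mpr (Real.exp_pos _)
    have hexpM : Real.exp (T / astar) ≤ (M : ℝ) := Nat.le_ceil _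
    have hnpos : (0 : ℝ) < n := Nat.cast_pos.mpr (by omega)
    have hle : n ≤ n * M := Nat.le_mul_of_pos_right n (by omega)
    have hsum : T ≤ ∑ m ∈ Finset.Icc n (n * M), a m := by
      have h1 : ∑ m ∈ Finset.Icc n (n * M),
            (astar * (Real.log ((m : ℝ) + 1) - Real.log m))
          ≤ ∑ m ∈ Finset.Icc n (n * M), a m := by
        apply Finset.sum_le_sum
        intro m hm
        have hm' : n ≤ m := (Finset.mem_Icc.mp hm).1
        have hmp : (0 : ℝ) < m := Nat.cast_pos.mpr (by omega)
        have hma : astar < (m : ℝ) * a m := hN m (le_trans hnN hm')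
        have hlog : Real.log ((m : ℝ) + 1) - Real.log m ≤ 1 / m := by
          rw [← Real.log_div (by positivity) (ne_of_gt hmp)]
          have h := Real.log_le_sub_one_of_pos (x := ((m : ℝ) + 1) / m) (by positivity)
          calc Real.log (((m : ℝ) + 1) / m) ≤ ((m : ℝ) + 1) / m - 1 := h
            _ = 1 / m := by field_simp; ring
        calc astar * (Real.log ((m : ℝ) + 1) - Real.log m)
            ≤ astar * (1 / m) := mul_le_mul_of_nonneg_left hlog hastar.le
          _ ≤ a m := by
              rw [mul_one_div, div_le_iff₀ hmp]
              nlinarith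
      have h2 : ∑ m ∈ Finset.Icc n (n * M),
            (astar * (Real.log ((m : ℝ) + 1) - Real.log m))
          = astar * (Real.log (((n * M : ℕ) : ℝ) + 1) - Real.log n) := by
        rw [← Finset.mul_sum, telescope_log n (n * M) hle]
      have h3 : T ≤ astar * (Real.log (((n * M : ℕ) : ℝ) + 1) - Real.log n) := by
        have hmul : (n : ℝ) * Real.exp (T / astar) ≤ ((n * M : ℕ) : ℝ) + 1 := by
          push_cast
          nlinarith
        have hlogge : Real.log n + T / astar ≤ Real.log (((n * M : ℕ) : ℝ) + 1) := by
          calc Real.log n + T / astar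
              = Real.log ((n : ℝ) * Real.exp (T / astar)) := by
                rw [Real.log_mul (ne_of_gt hnpos) (Real.exp_ne_zero _), Real.log_exp]
            _ ≤ _ := Real.log_le_log (by positivity) hmul
        rw [← div_le_iff₀' hastar]
        linarith
      calc T ≤ astar * (Real.log (((n * M : ℕ) : ℝ) + 1) - Real.log n) := h3
        _ = _ := h2.symm
        _ ≤ _ := h1
    have hτle : τ n T ≤ n * M := by
      rw [hτ]
      exact Nat.sInf_le ⟨hle, hsum⟩
    have hdiv : (τ n T : ℝ) / n ≤ ((n * M : ℕ) : ℝ) / n := by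
      have h' : (τ n T : ℝ) ≤ ((n * M : ℕ) : ℝ) := by exact_mod_cast hτle
      gcongr
    have hcast : ((n * M : ℕ) : ℝ) / n = (M : ℝ) := by
      push_cast
      field_simp
    have hMle : (M : ℝ) ≤ Real.exp (T / astar + 1) := by
      have hceil : (M : ℝ) < Real.exp (T / astar) + 1 :=
        Nat.ceil_lt_add_one (Real.exp_pos _).le
      have he1 : Real.exp (T / astar) ≥ 1 :=
        Real.one_le_exp (by positivity)
      have he : (2.7182818283 : ℝ) < Real.exp 1 := Real.exp_one_gt_d9
      rw [Real.exp_add]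
      nlinarith
    calc (τ n T : ℝ) / n ≤ ((n * M : ℕ) : ℝ) / n := hdiv
      _ = (M : ℝ) := hcast
      _ ≤ _ := hMle
  refine ⟨key, fun T hT => ?_⟩
  obtain ⟨N, hN⟩ := eventually_atTop.mp (key T hT)
  refine ⟨max (Real.exp (T / astar + 1))
    ((Finset.range (N + 1)).sup' (by simp) fun n => (τ n T : ℝ) / n), ?_⟩
  rintro x ⟨n, rfl⟩
  by_cases h : N ≤ n
  · exact le_max_of_le_left (hN n h)
  · refine le_max_of_le_right (Finset.le_sup' (fun n => (τ n T : ℝ) / n) ?_)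
    exact Finset.mem_range.mpr (by omega)
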